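/- Let G ⊆ Σ_n act isotypically and non-transitively on {1,...,n}, let x be the partition into G-orbits, and let x^⊥ be the set of G-invariant partitions y with x ∧ y = 0̂ and x ∨ y = 1̂. Then the normalizer N_{Σ_n}(G) acts transitively on x^⊥. -/

import Mathlib

open MulAction

private theorem aux8 {n : ℕ} {G : Subgroup (Equiv.Perm (Fin n))} {y : Setoid (Fin n)}
    (hinv : ∀ (g : G) (a b : Fin n), y.r a b → y.r (g • a) (g • b))
    (hbot : MulAction.orbitRel G (Fin n) ⊓ y = ⊥)
    (htop : MulAction.orbitRel G (Fin n) ⊔ y = ⊤)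
    (a t : Fin n) : ∃! b, b ∈ MulAction.orbit G t ∧ y.r a b := by
  obtain ⟨b, hb1, hb2⟩ : ∃ b, b ∈ MulAction.orbit G t ∧ y.r a b := by
    let R : Fin n → Fin n → Prop := fun a b => ∃ c, c ∈ orbit G b ∧ y.r a c
    have hRsymm : ∀ {a b}, R a b → R b a := by
      rintro a b ⟨c, hc, hyc⟩
      obtain ⟨g, rfl⟩ := mem_orbit_iff.1 hc
      refine ⟨g⁻¹ • a, mem_orbit _ _, y.symm ?_⟩
      have := hinv g⁻¹ a (g • b) hyc
      simpa [inv_smul_smul] using this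
    have hRtrans : ∀ {a b c}, R a b → R b c → R a c := by
      rintro a b c ⟨c1, hc1, hyc1⟩ ⟨c2, hc2, hyc2⟩
      obtain ⟨g, rfl⟩ := mem_orbit_iff.1 hc1
      refine ⟨g • c2, ?_, y.trans hyc1 (hinv g _ _ hyc2)⟩
      obtain ⟨h, rfl⟩ := mem_orbit_iff.1 hc2
      simpa [smul_smul] using mem_orbit c (g * h)
    let S : Setoid (Fin n) := ⟨R, ⟨fun a => ⟨a, mem_orbit_self a, y.refl a⟩,
      hRsymm, hRtrans⟩⟩
    have hle : MulAction.orbitRel G (Fin n) ⊔ y ≤ S := by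
      refine sup_le ?_ ?_ <;> rw [Setoid.le_def]
      · intro u v huv
        exact ⟨u, orbitRel_apply.1 huv, y.refl u⟩
      · intro u v huv
        exact ⟨v, mem_orbit_self v, huv⟩
    rw [htop, Setoid.le_def] at hle
    exact hle (by rw [Setoid.top_def]; trivial : (⊤ : Setoid (Fin n)) a t)
  refine ⟨b, ⟨hb1, hb2⟩, ?_⟩
  rintro b' ⟨hb1', hb2'⟩
  have horb : b' ∈ orbit G b := by
    rw [← orbit_eq_iff] at hb1
    rw [← hb1] at hb1'
    exact hb1'
  have : (MulAction.orbitRel G (Fin n) ⊓ y) b' b :=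
    Setoid.inf_iff_and.2 ⟨orbitRel_apply.2 horb, y.trans (y.symm hb2') hb2⟩
  rw [hbot] at this
  exact this

theorem stmt8 (n : ℕ) (G : Subgroup (Equiv.Perm (Fin n)))
    (hiso : ∀ a b : Fin n,
      ∃ e : MulAction.orbit G a ≃ MulAction.orbit G b,
        ∀ (g : G) (x : Fin n) (hx : x ∈ MulAction.orbit G a)
          (hgx : g • x ∈ MulAction.orbit G a),
          (e ⟨g • x, hgx⟩ : Fin n) = g • (e ⟨x, hx⟩ : Fin n))
    (hnontr : ¬ MulAction.IsPretransitive G (Fin n)) :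
    ∀ y z : Setoid (Fin n),
      ((∀ (g : G) (a b : Fin n), y.r a b → y.r (g • a) (g • b)) ∧
        MulAction.orbitRel G (Fin n) ⊓ y = ⊥ ∧
        MulAction.orbitRel G (Fin n) ⊔ y = ⊤) →
      ((∀ (g : G) (a b : Fin n), z.r a b → z.r (g • a) (g • b)) ∧
        MulAction.orbitRel G (Fin n) ⊓ z = ⊥ ∧
        MulAction.orbitRel G (Fin n) ⊔ z = ⊤) →
      ∃ σ ∈ Subgroup.normalizer (G : Set (Equiv.Perm (Fin n))), z = Setoid.comap σ.symm y := by
  rintro y z ⟨hyinv, hybot, hytop⟩ ⟨hzinv, hzbot, hztop⟩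
  rcases isEmpty_or_nonempty (Fin n) with hE | hNE
  · refine ⟨1, one_mem _, ?_⟩
    apply Setoid.ext
    intro a
    exact (hE.elim a)
  · classical
    obtain ⟨t⟩ := hNE
    have auxy := fun a s => aux8 hyinv hybot hytop a s
    have auxz := fun a s => aux8 hzinv hzbot hztop a s
    -- u a : unique point of orbit t y-related to a
    set u : Fin n → Fin n := fun a => (auxy a t).choose with hu_def
    have hu : ∀ a, u a ∈ orbit G t ∧ y.r a (u a) := fun a => (auxy a t).choose_spec.1
    have hu_uniq : ∀ a b, b ∈ orbit G t ∧ y.r a b → b = u a :=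
      fun a => (auxy a t).choose_spec.2
    set v : Fin n → Fin n := fun a => (auxz a t).choose with hv_def
    have hv : ∀ a, v a ∈ orbit G t ∧ z.r a (v a) := fun a => (auxz a t).choose_spec.1
    have hv_uniq : ∀ a b, b ∈ orbit G t ∧ z.r a b → b = v a :=
      fun a => (auxz a t).choose_spec.2
    set f : Fin n → Fin n := fun a => (auxz (u a) a).choose with hf_def
    have hf : ∀ a, f a ∈ orbit G a ∧ z.r (u a) (f a) :=
      fun a => (auxz (u a) a).choose_spec.1
    have hf_uniq : ∀ a b, b ∈ orbit G a ∧ z.r (u a) b → b = f a :=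
      fun a => (auxz (u a) a).choose_spec.2
    set w : Fin n → Fin n := fun a => (auxy (v a) a).choose with hw_def
    have hw : ∀ a, w a ∈ orbit G a ∧ y.r (v a) (w a) :=
      fun a => (auxy (v a) a).choose_spec.1
    have hw_uniq : ∀ a b, b ∈ orbit G a ∧ y.r (v a) b → b = w a :=
      fun a => (auxy (v a) a).choose_spec.2
    -- inverses
    have hvf : ∀ a, v (f a) = u a := by
      intro a
      exact ((hv_uniq (f a) (u a)) ⟨(hu a).1, z.symm (hf a).2⟩).symm
    have huw : ∀ a, u (w a) = v a := by
      intro a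
      exact ((hu_uniq (w a) (v a)) ⟨(hv a).1, y.symm (hw a).2⟩).symm
    have hwf : ∀ a, w (f a) = a := by
      intro a
      refine ((hw_uniq (f a) a) ⟨?_, ?_⟩).symm
      · exact mem_orbit_symm.1 (hf a).1
      · rw [hvf]; exact y.symm (hu a).2
    have hfw : ∀ a, f (w a) = a := by
      intro a
      refine ((hf_uniq (w a) a) ⟨?_, ?_⟩).symm
      · exact mem_orbit_symm.1 (hw a).1
      · rw [huw]; exact z.symm (hv a).2
    set σ : Equiv.Perm (Fin n) := ⟨f, w, hwf, hfw⟩ with hσ_def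
    -- equivariance
    have hu_eq : ∀ (g : G) (a : Fin n), u (g • a) = g • u a := by
      intro g a
      refine ((hu_uniq (g • a) (g • u a)) ⟨?_, hyinv g _ _ (hu a).2⟩).symm
      obtain ⟨h, hh⟩ := mem_orbit_iff.1 (hu a).1
      rw [← hh, smul_smul]
      exact mem_orbit t (g * h)
    have hf_eq : ∀ (g : G) (a : Fin n), f (g • a) = g • f a := by
      intro g a
      refine ((hf_uniq (g • a) (g • f a)) ⟨?_, ?_⟩).symm
      · rw [orbit_smul]
        obtain ⟨h, hh⟩ := mem_orbit_iff.1 (hf a).1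
        rw [← hh, smul_smul]
        exact mem_orbit a (g * h)
      · rw [hu_eq]
        exact hzinv g _ _ (hf a).2
    have hcomm : ∀ g ∈ G, g * σ = σ * g := by
      intro g hg
      refine Equiv.ext fun a => ?_
      exact (hf_eq ⟨g, hg⟩ a).symm
    refine ⟨σ, ?_, ?_⟩
    · rw [Subgroup.mem_normalizer_iff]
      intro g
      constructor
      · intro hg
        have : σ * g * σ⁻¹ = g := by
          rw [← hcomm g hg]
          group
        rw [this]; exact hg
      · intro hg
        have h2 : σ * (σ * g * σ⁻¹) = (σ * g * σ⁻¹) * σ := hcomm _ hg |>.symm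
        have : g = σ * g * σ⁻¹ := by
          have := hcomm _ hg
          calc g = σ⁻¹ * (σ * g * σ⁻¹) * σ := by group
          _ = σ⁻¹ * ((σ * g * σ⁻¹) * σ) := by group
          _ = σ⁻¹ * (σ * (σ * g * σ⁻¹)) := by rw [h2]
          _ = σ * g * σ⁻¹ := by group
        rw [this]; exact hg
    · apply Setoid.ext
      intro a b
      show z a b ↔ y (w a) (w b)
      constructor
      · intro hzab
        have hvab : v a = v b :=
          hv_uniq b (v a) ⟨(hv a).1, z.trans (z.symm hzab) (hv a).2⟩
        refine y.trans (y.symm (hw a).2) ?_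
        rw [hvab]
        exact (hw b).2
      · intro hyw
        have hvv : y.r (v a) (v b) :=
          y.trans (y.trans (hw a).2 hyw) (y.symm (hw b).2)
        have horb : v a ∈ orbit G (v b) := by
          have h1 := (hv a).1
          rwa [← orbit_eq_iff.2 (hv b).1] at h1
        have hvab : v a = v b := by
          have h3 : (MulAction.orbitRel G (Fin n) ⊓ y) (v a) (v b) :=
            Setoid.inf_iff_and.2 ⟨orbitRel_apply.2 horb, hvv⟩
          rw [hybot] at h3
          exact h3
        refine z.trans (hv a).2 ?_
        rw [hvab]
        exact z.symm (hv b).2
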